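/- Let A be a unital dual Banach algebra with predual A_* and unit e, and identify (A ⊗̂ A)' with B(A, A'). If T ∈ σWC(B(A,A')) (i.e., the orbit maps a ↦ a·T and a ↦ T·a are σ(A,A_*)-to-weak continuous), then T(A) ⊆ κ_{A_*}(A_*) and T'(κ_A(A)) ⊆ κ_{A_*}(A_*). -/

import Mathlib

namespace NormedSpace

/-- The topological dual of a seminormed space `E` (the Mathlib definition of December 2024,
since removed in favour of `StrongDual`). -/
abbrev Dual (𝕜 : Type*) [NontriviallyNormedField 𝕜] (E : Type*) [SeminormedAddCommGroup E]
    [NormedSpace 𝕜 E] : Type _ :=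
  E →L[𝕜] 𝕜

end NormedSpace

open NormedSpace

set_option synthInstance.maxHeartbeats 1000000
set_option maxHeartbeats 1000000

noncomputable section

/-- The Banach-space adjoint `T' : F' → E'` of `T : E → F`. -/
def adjOp {E F : Type*} [NormedAddCommGroup E] [NormedSpace ℂ E]
    [NormedAddCommGroup F] [NormedSpace ℂ F] (T : E →L[ℂ] F) :
    Dual ℂ F →L[ℂ] Dual ℂ E :=
  (ContinuousLinearMap.compL ℂ E F ℂ).flip T

/-- The weak topology `σ(E, p)` determined by a subspace `p ⊆ E'`. -/
def weakTop {E : Type*} [NormedAddCommGroup E] [NormedSpace ℂ E]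
    (p : Submodule ℂ (Dual ℂ E)) : TopologicalSpace E :=
  ⨅ φ : p, TopologicalSpace.induced (fun x => (φ : Dual ℂ E) x) inferInstance

/-- The canonical map `E → p'` for a subspace `p ⊆ E'`. -/
def predualMap {E : Type*} [NormedAddCommGroup E] [NormedSpace ℂ E]
    (p : Submodule ℂ (Dual ℂ E)) : E →L[ℂ] Dual ℂ p :=
  (adjOp (E := p) (F := Dual ℂ E) p.subtypeL).comp (inclusionInDoubleDual ℂ E)

/-- `p` is a predual of `E` when the canonical map `E → p'` is an isomorphism. -/
def IsPredual {E : Type*} [NormedAddCommGroup E] [NormedSpace ℂ E]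
    (p : Submodule ℂ (Dual ℂ E)) : Prop :=
  Function.Bijective (predualMap p)

/-- The identity map of `E`, viewed as taking values in `E` with its weak topology. -/
def toWeak {E : Type*} [NormedAddCommGroup E] [NormedSpace ℂ E] : E → WeakSpace ℂ E :=
  fun x => x

/-- Left multiplication `b ↦ a * b` as a continuous linear map. -/
def lmul {A : Type*} [NormedRing A] [NormedAlgebra ℂ A] (a : A) : A →L[ℂ] A :=
  ContinuousLinearMap.mul ℂ A a

/-- Right multiplication `b ↦ b * a` as a continuous linear map. -/
def rmul {A : Type*} [NormedRing A] [NormedAlgebra ℂ A] (a : A) : A →L[ℂ] A :=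
  (ContinuousLinearMap.mul ℂ A).flip a

/-- `T ∈ σWC(B(A,A'))`: both orbit maps `a ↦ a·T = T ∘ rmul a` and
`a ↦ T·a = (lmul a)' ∘ T` are `σ(A,Ap)`-to-weak continuous. -/
def SWC {A : Type*} [NormedRing A] [NormedAlgebra ℂ A]
    (Ap : Submodule ℂ (Dual ℂ A)) : Set (A →L[ℂ] Dual ℂ A) :=
  {T | @Continuous A (WeakSpace ℂ (A →L[ℂ] Dual ℂ A)) (weakTop Ap) _
        (fun a => toWeak (T.comp (rmul a))) ∧
      @Continuous A (WeakSpace ℂ (A →L[ℂ] Dual ℂ A)) (weakTop Ap) _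
        (fun a => toWeak ((adjOp (lmul a)).comp T))}

/-- A norm-continuous functional which is `σ(E,p)`-continuous lies in `p`. -/
lemma mem_of_weakTop_continuous {E : Type*} [NormedAddCommGroup E] [NormedSpace ℂ E]
    (p : Submodule ℂ (Dual ℂ E)) (f : Dual ℂ E)
    (hf : @Continuous E ℂ (weakTop p) _ f) : f ∈ p := by
  have h0 : f ⁻¹' Metric.ball 0 1 ∈ @nhds E (weakTop p) 0 := by
    have ht := @Continuous.tendsto E ℂ (weakTop p) _ f hf 0
    have hb : Metric.ball (0:ℂ) 1 ∈ nhds (f 0) := by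
      rw [map_zero]; exact Metric.ball_mem_nhds _ one_pos
    exact ht hb
  rw [weakTop, nhds_iInf] at h0
  simp only [nhds_induced] at h0
  obtain ⟨I, hIfin, V, hV, hs⟩ := Filter.mem_iInf.1 h0
  have hker : (⨅ i : I, LinearMap.ker ((i : p) : Dual ℂ E).toLinearMap) ≤
      LinearMap.ker f.toLinearMap := by
    intro x hx
    simp only [Submodule.mem_iInf, LinearMap.mem_ker, ContinuousLinearMap.coe_coe] at hx ⊢
    by_contra hfx
    obtain ⟨t, ht⟩ : ∃ t : ℂ, 1 ≤ ‖t • f x‖ := ⟨(f x)⁻¹ * 2, by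
      rw [smul_eq_mul, mul_comm, ← mul_assoc, mul_inv_cancel₀ hfx, one_mul]; norm_num⟩
    have hmem : t • x ∈ ⋂ i, V i := by
      intro s hs'
      simp only [Set.mem_range] at hs'
      obtain ⟨i, rfl⟩ := hs'
      obtain ⟨U, hU, hUV⟩ := Filter.mem_comap.1 (hV i)
      apply hUV
      have hz : ((i : p) : Dual ℂ E) (t • x) = 0 := by
        rw [map_smul, hx i, smul_zero]
      simp only [Set.mem_preimage, hz]
      have h00 : ((i : p) : Dual ℂ E) (0:E) = 0 := map_zero _
      rw [← h00]
      exact mem_of_mem_nhds hU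
    rw [← hs] at hmem
    have hlt : ‖f (t • x)‖ < 1 := by
      simpa [dist_zero_right] using hmem
    rw [map_smul] at hlt
    exact absurd ht (not_le.2 hlt)
  have hIfin' : Finite I := hIfin
  have hspan := mem_span_of_iInf_ker_le_ker (𝕜 := ℂ)
    (L := fun i : I => ((i : p) : Dual ℂ E).toLinearMap) hker
  have hle : Submodule.span ℂ (Set.range fun i : I => ((i : p) : Dual ℂ E).toLinearMap)
      ≤ p.map (ContinuousLinearMap.coeLM ℂ) := by
    rw [Submodule.span_le]
    rintro _ ⟨i, rfl⟩
    exact ⟨((i : p) : Dual ℂ E), (i : p).2, rfl⟩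
  obtain ⟨g, hg, hgf⟩ := hle hspan
  have hgf' : g = f := ContinuousLinearMap.coe_injective hgf
  rwa [← hgf']

/-- Let `A` be a unital dual Banach algebra with predual `Ap ⊆ A'` (a closed submodule
with `A ≅ (Ap)'`).  If `T ∈ σWC(B(A,A'))` then `T(A)` and `T'(κ_A(A))` are contained in
(the canonical copy of) `Ap`. -/
theorem stmt14 {A : Type*} [NormedRing A] [NormedAlgebra ℂ A] [CompleteSpace A]
    (Ap : Submodule ℂ (Dual ℂ A)) (hc : IsClosed (Ap : Set (Dual ℂ A)))
    (hsub : ∀ μ ∈ Ap, ∀ a : A, μ.comp (lmul a) ∈ Ap ∧ μ.comp (rmul a) ∈ Ap)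
    (hp : IsPredual Ap) (T : A →L[ℂ] Dual ℂ A) (hT : T ∈ SWC Ap) :
    (∀ a : A, T a ∈ Ap) ∧
    (∀ a : A, adjOp T (inclusionInDoubleDual ℂ A a) ∈ Ap) := by
  constructor
  · intro a
    apply mem_of_weakTop_continuous
    let ψ : Dual ℂ (A →L[ℂ] Dual ℂ A) :=
      (ContinuousLinearMap.apply ℂ ℂ (1:A)).comp (ContinuousLinearMap.apply ℂ (Dual ℂ A) a)
    have hψ : Continuous fun S : WeakSpace ℂ (A →L[ℂ] Dual ℂ A) => ψ S :=
      WeakBilin.eval_continuous _ ψ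
    have h2 := @Continuous.comp A (WeakSpace ℂ (A →L[ℂ] Dual ℂ A)) ℂ (weakTop Ap) _ _ _ _ hψ hT.2
    have heq : ((fun S : WeakSpace ℂ (A →L[ℂ] Dual ℂ A) => ψ S) ∘
        (fun x : A => toWeak ((adjOp (lmul x)).comp T))) = fun x : A => (T a) x := by
      funext x
      simp [ψ, toWeak, adjOp, lmul, Function.comp, ContinuousLinearMap.apply_apply,
        ContinuousLinearMap.flip_apply, ContinuousLinearMap.compL_apply,
        ContinuousLinearMap.coe_comp', ContinuousLinearMap.mul_apply', mul_one]
    rwa [heq] at h2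
  · intro a
    apply mem_of_weakTop_continuous
    let ψ : Dual ℂ (A →L[ℂ] Dual ℂ A) :=
      (ContinuousLinearMap.apply ℂ ℂ a).comp (ContinuousLinearMap.apply ℂ (Dual ℂ A) (1:A))
    have hψ : Continuous fun S : WeakSpace ℂ (A →L[ℂ] Dual ℂ A) => ψ S :=
      WeakBilin.eval_continuous _ ψ
    have h2 := @Continuous.comp A (WeakSpace ℂ (A →L[ℂ] Dual ℂ A)) ℂ (weakTop Ap) _ _ _ _ hψ hT.1
    have heq : ((fun S : WeakSpace ℂ (A →L[ℂ] Dual ℂ A) => ψ S) ∘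
        (fun x : A => toWeak (T.comp (rmul x)))) =
        fun x : A => (adjOp T (inclusionInDoubleDual ℂ A a)) x := by
      funext x
      simp [ψ, toWeak, adjOp, rmul, Function.comp, ContinuousLinearMap.apply_apply,
        ContinuousLinearMap.flip_apply, ContinuousLinearMap.compL_apply,
        ContinuousLinearMap.coe_comp', ContinuousLinearMap.mul_apply', one_mul,
        NormedSpace.dual_def]
    rwa [heq] at h2
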